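/- Let X_T be the binary tree space, B the set of branches of T, and for f ∈ X_T* and a branch β define l_β(f) = limsup_{t∈β} |f(e_t)| (limsup along the linearly ordered branch). Then ∑_{β∈B} l_β(f) ≤ ‖f‖; in particular l_β(f) = 0 for all but countably many branches β. -/
import Mathlib


open Metric Filter Topology

/-- Nodes of the infinite binary tree: finite sequences over `{0,1}`. -/
abbrev TreeNode := List Bool

/-- A finite set of nodes is a chain if its elements are pairwise comparable for the
initial-segment (prefix) order. -/
def IsFinChain (A : Finset TreeNode) : Prop := ∀ s ∈ A, ∀ t ∈ A, s <+: t ∨ t <+: s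

/-- A set of nodes is a chain if its elements are pairwise comparable. -/
def IsSetChain (A : Set TreeNode) : Prop := ∀ s ∈ A, ∀ t ∈ A, s <+: t ∨ t <+: s

/-- A branch is a maximal chain of the binary tree. -/
def IsBranch (β : Set TreeNode) : Prop :=
  IsSetChain β ∧ ∀ γ : Set TreeNode, IsSetChain γ → β ⊆ γ → γ = β

/-- A set of nodes is an antichain if its elements are pairwise incomparable. -/
def IsTreeAntichain (A : Set TreeNode) : Prop :=
  ∀ s ∈ A, ∀ t ∈ A, s ≠ t → ¬ s <+: t ∧ ¬ t <+: s

/-- The binary tree norm of a finitely supported function on the tree: the supremum over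
chains `A` of `∑_{t ∈ A} |c t|`. -/
noncomputable def treeNorm (c : TreeNode →₀ ℝ) : ℝ :=
  sSup {r | ∃ A : Finset TreeNode, IsFinChain A ∧ r = ∑ t ∈ A, |c t|}

/-- The node of length `n` lying on the (infinite) branch determined by `b : ℕ → Bool`. -/
def branchNode (b : ℕ → Bool) (n : ℕ) : TreeNode := List.ofFn fun i : Fin n => b i


lemma real_sign_mul_self (r : ℝ) : Real.sign r * r = |r| := by
  rcases lt_trichotomy r 0 with h | h | h
  · rw [Real.sign_of_neg h, abs_of_neg h]; ring
  · simp [h]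
  · rw [Real.sign_of_pos h, abs_of_pos h]; ring

lemma real_sign_abs_le (r : ℝ) : |Real.sign r| ≤ 1 := by
  rcases lt_trichotomy r 0 with h | h | h
  · simp [Real.sign_of_neg h]
  · simp [h]
  · simp [Real.sign_of_pos h]

lemma branch_not_prefix {b b' : ℕ → Bool} {m k k' : ℕ} (h : b m ≠ b' m)
    (hk : m < k) (hk' : m < k') : ¬ branchNode b k <+: branchNode b' k' := by
  intro hp
  have hlen : m < (branchNode b k).length := by simpa [branchNode] using hk
  have := hp.getElem hlen
  simp [branchNode, List.getElem_ofFn] at this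
  exact h this

lemma treeNorm_le {c : TreeNode →₀ ℝ} {r : ℝ} (hr : 0 ≤ r)
    (h : ∀ A : Finset TreeNode, IsFinChain A → ∑ t ∈ A, |c t| ≤ r) : treeNorm c ≤ r :=
  Real.sSup_le (by rintro x ⟨A, hA, rfl⟩; exact h A hA) hr

lemma key_sum_le {X : Type*} [NormedAddCommGroup X] [NormedSpace ℝ X] (e : TreeNode → X)
    (hnorm : ∀ c : TreeNode →₀ ℝ, ‖c.sum fun t a => a • e t‖ = treeNorm c)
    (f : X →L[ℝ] ℝ) (S : Finset TreeNode)
    (hS : ∀ s ∈ S, ∀ t ∈ S, s ≠ t → ¬ s <+: t) :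
    ∑ t ∈ S, |f (e t)| ≤ ‖f‖ := by
  classical
  set σ : TreeNode → ℝ := fun t => Real.sign (f (e t)) with hσ
  set c : TreeNode →₀ ℝ := ∑ t ∈ S, Finsupp.single t (σ t) with hcdef
  have hc : ∀ u, c u = if u ∈ S then σ u else 0 := by
    intro u
    rw [hcdef, Finsupp.finset_sum_apply]
    simp [Finsupp.single_apply]
  set x : X := c.sum fun t a => a • e t with hxdef
  have hxnorm : ‖x‖ ≤ 1 := by
    rw [hxdef, hnorm]
    refine treeNorm_le zero_le_one fun A hA => ?_
    have hfil : ∑ u ∈ A, |c u| = ∑ u ∈ A.filter (· ∈ S), |c u| := by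
      refine (Finset.sum_filter_of_ne fun u hu hne => ?_).symm
      by_contra hus
      rw [hc u, if_neg hus] at hne
      simp at hne
    rw [hfil]
    have hcard : (A.filter (· ∈ S)).card ≤ 1 := by
      rw [Finset.card_le_one]
      intro u hu v hv
      simp only [Finset.mem_filter] at hu hv
      by_contra hne
      rcases hA u hu.1 v hv.1 with hp | hp
      · exact hS u hu.2 v hv.2 hne hp
      · exact hS v hv.2 u hu.2 (Ne.symm hne) hp
    calc ∑ u ∈ A.filter (· ∈ S), |c u| ≤ ∑ _u ∈ A.filter (· ∈ S), 1 := by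
          refine Finset.sum_le_sum fun u hu => ?_
          rw [hc u, if_pos (Finset.mem_filter.1 hu).2]
          exact real_sign_abs_le _
      _ = (A.filter (· ∈ S)).card := by simp
      _ ≤ 1 := by exact_mod_cast hcard
  have hx : x = ∑ t ∈ S, σ t • e t := by
    rw [hxdef, ← Finsupp.linearCombination_apply, hcdef, map_sum]
    simp [Finsupp.linearCombination_single]
  have hfx : f x = ∑ t ∈ S, |f (e t)| := by
    rw [hx, map_sum]
    refine Finset.sum_congr rfl fun t _ => ?_
    rw [map_smul, smul_eq_mul, hσ, real_sign_mul_self]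
  calc ∑ t ∈ S, |f (e t)| = f x := hfx.symm
    _ ≤ ‖f x‖ := le_abs_self _
    _ ≤ ‖f‖ * ‖x‖ := f.le_opNorm x
    _ ≤ ‖f‖ * 1 := mul_le_mul_of_nonneg_left hxnorm (norm_nonneg f)
    _ = ‖f‖ := mul_one _

/-- **The branch limsups of a functional are summable, with sum at most `‖f‖`.** For the
binary tree space and `f ∈ X_T^*`, set `l_β(f) = limsup_{t ∈ β} |f(e_t)|` along each branch
`β` (branches being parametrized by `b : ℕ → Bool`). Then the family `(l_β(f))_β` is
summable with `∑_β l_β(f) ≤ ‖f‖`; in particular `l_β(f) = 0` for all but countably many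
branches. -/
theorem binary_tree_branch_limsups_summable {X : Type*} [NormedAddCommGroup X]
    [NormedSpace ℝ X] [CompleteSpace X] (e : TreeNode → X)
    (hnorm : ∀ c : TreeNode →₀ ℝ, ‖c.sum fun t a => a • e t‖ = treeNorm c)
    (hdense : DenseRange fun c : TreeNode →₀ ℝ => c.sum fun t a => a • e t)
    (f : X →L[ℝ] ℝ) :
    Summable (fun b : ℕ → Bool => limsup (fun n => |f (e (branchNode b n))|) atTop) ∧
    (∑' b : ℕ → Bool, limsup (fun n => |f (e (branchNode b n))|) atTop) ≤ ‖f‖ ∧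
    {b : ℕ → Bool | limsup (fun n => |f (e (branchNode b n))|) atTop ≠ 0}.Countable := by
  classical
  set u : (ℕ → Bool) → ℕ → ℝ := fun b n => |f (e (branchNode b n))| with hu
  set l : (ℕ → Bool) → ℝ := fun b => limsup (fun n => |f (e (branchNode b n))|) atTop with hl
  have hub : ∀ b n, u b n ≤ ‖f‖ := by
    intro b n
    have := key_sum_le e hnorm f {branchNode b n} (by
      intro s hs t ht hne
      simp only [Finset.mem_singleton] at hs ht
      exact absurd (hs.trans ht.symm) hne)
    simpa using this
  have hbdd : ∀ b, IsBoundedUnder (· ≤ ·) atTop (u b) :=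
    fun b => isBoundedUnder_of ⟨‖f‖, fun n => hub b n⟩
  have hcobdd : ∀ b, IsCoboundedUnder (· ≤ ·) atTop (u b) :=
    fun b => (isBoundedUnder_of ⟨0, fun n => abs_nonneg _⟩ :
      IsBoundedUnder (· ≥ ·) atTop (u b)).isCoboundedUnder_le
  have hl0 : ∀ b, 0 ≤ l b := fun b =>
    le_limsup_of_frequently_le (Frequently.of_forall fun n => abs_nonneg _) (hbdd b)
  have hsum : ∀ S : Finset (ℕ → Bool), ∑ b ∈ S, l b ≤ ‖f‖ := by
    intro S
    refine le_of_forall_pos_le_add fun ε hε => ?_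
    set δ : ℝ := ε / (S.card + 1) with hδdef
    have hδ : 0 < δ := by positivity
    have hNe : ∀ b b' : ℕ → Bool, ∃ m, b ≠ b' → b m ≠ b' m := by
      intro b b'
      by_cases h : b = b'
      · exact ⟨0, fun hc => absurd h hc⟩
      · obtain ⟨m, hm⟩ := Function.ne_iff.1 h
        exact ⟨m, fun _ => hm⟩
    choose M hM using hNe
    set N : ℕ := (S.sup fun b => S.sup fun b' => M b b') + 1 with hN
    have hMN : ∀ b ∈ S, ∀ b' ∈ S, M b b' < N := by
      intro b hb b' hb'
      exact Nat.lt_succ_of_le (le_trans (Finset.le_sup (f := fun b' => M b b') hb')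
        (Finset.le_sup (f := fun b => S.sup fun b' => M b b') hb))
    have hpick : ∀ b : ℕ → Bool, ∃ n, N ≤ n ∧ l b - δ < u b n := by
      intro b
      have hfr := frequently_lt_of_lt_limsup (hcobdd b)
        (show l b - δ < l b by linarith)
      obtain ⟨n, hn1, hn2⟩ := (hfr.and_eventually (eventually_ge_atTop N)).exists
      exact ⟨n, hn2, hn1⟩
    choose n hn1 hn2 using hpick
    have hinj : ∀ b ∈ S, ∀ b' ∈ S,
        branchNode b (n b) = branchNode b' (n b') → b = b' := by
      intro b hb b' hb' heq
      by_contra hne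
      exact branch_not_prefix (hM b b' hne) (lt_of_lt_of_le (hMN b hb b' hb') (hn1 b))
        (lt_of_lt_of_le (hMN b hb b' hb') (hn1 b')) (heq ▸ List.prefix_refl _)
    set T : Finset TreeNode := S.image fun b => branchNode b (n b) with hT
    have hanti : ∀ s ∈ T, ∀ t ∈ T, s ≠ t → ¬ s <+: t := by
      intro s hs t ht hne
      rw [hT, Finset.mem_image] at hs ht
      obtain ⟨b, hb, rfl⟩ := hs
      obtain ⟨b', hb', rfl⟩ := ht
      have hbb : b ≠ b' := fun h => hne (by rw [h])
      exact branch_not_prefix (hM b b' hbb) (lt_of_lt_of_le (hMN b hb b' hb') (hn1 b))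
        (lt_of_lt_of_le (hMN b hb b' hb') (hn1 b'))
    have hTsum : ∑ b ∈ S, u b (n b) = ∑ t ∈ T, |f (e t)| := by
      rw [hT, Finset.sum_image hinj]
    have hkey := key_sum_le e hnorm f T hanti
    have hcard : (S.card : ℝ) * δ ≤ ε := by
      rw [hδdef]
      have h1 : (0:ℝ) < S.card + 1 := by positivity
      calc (S.card : ℝ) * (ε / (S.card + 1)) ≤ (S.card + 1) * (ε / (S.card + 1)) := by
            apply mul_le_mul_of_nonneg_right (by linarith) (by positivity)
        _ = ε := by field_simp
    calc ∑ b ∈ S, l b ≤ ∑ b ∈ S, (u b (n b) + δ) := by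
          refine Finset.sum_le_sum fun b _ => ?_
          have := hn2 b
          linarith
      _ = ∑ b ∈ S, u b (n b) + S.card * δ := by
          rw [Finset.sum_add_distrib, Finset.sum_const, nsmul_eq_mul]
      _ ≤ ‖f‖ + ε := by
          rw [hTsum]
          linarith
  have hsumm : Summable l := summable_of_sum_le (fun b => hl0 b) hsum
  refine ⟨hsumm, Summable.tsum_le_of_sum_le hsumm hsum, hsumm.countable_support⟩
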